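/- Let D ⊆ ℝ be closed and f, h : D → ℝ. Then f' = h in the strong sense if and only if there exists a continuous g : D × D → ℝ such that g(x, x) = h(x) for all x ∈ D and g(x1, x2) = (f(x2) - f(x1))/(x2 - x1) whenever x1 ≠ x2 (note this forces g(x1,x2) = g(x2,x1)). -/
import Mathlib


/-- `f' = h` in the strong sense on `D`. -/
def StrongDerivOn (D : Set ℝ) (f h : ℝ → ℝ) : Prop :=
  ∀ x ∈ D, ∀ ε > 0, ∃ δ > 0, ∀ x1 ∈ D, ∀ x2 ∈ D, x1 ≠ x2 →
    |x1 - x| < δ → |x2 - x| < δ → |(f x2 - f x1) / (x2 - x1) - h x| < ε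

theorem stmt_4 (D : Set ℝ) (hD : IsClosed D) (f h : ℝ → ℝ)
    (hf : ContinuousOn f D) (hh : ContinuousOn h D) :
    StrongDerivOn D f h ↔
      ∃ g : ℝ × ℝ → ℝ, ContinuousOn g (D ×ˢ D) ∧
        (∀ x ∈ D, g (x, x) = h x) ∧
        (∀ x1 ∈ D, ∀ x2 ∈ D, x1 ≠ x2 → g (x1, x2) = (f x2 - f x1) / (x2 - x1)) := by
  constructor
  · intro H
    refine ⟨fun p => if p.1 = p.2 then h p.1 else (f p.2 - f p.1) / (p.2 - p.1), ?_, ?_, ?_⟩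
    · rintro ⟨a, b⟩ ⟨ha, hb⟩
      by_cases hab : a = b
      · subst hab
        rw [Metric.continuousWithinAt_iff]
        intro ε hε
        obtain ⟨δ1, hδ1, hδ1'⟩ := H a ha (ε / 2) (by linarith)
        have hc := hh a ha
        rw [Metric.continuousWithinAt_iff] at hc
        obtain ⟨δ2, hδ2, hδ2'⟩ := hc (ε / 2) (by linarith)
        refine ⟨min δ1 δ2, lt_min hδ1 hδ2, ?_⟩
        rintro ⟨y1, y2⟩ ⟨hy1, hy2⟩ hdist
        rw [Prod.dist_eq, max_lt_iff] at hdist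
        obtain ⟨hd1, hd2⟩ := hdist
        simp only [if_pos rfl, if_true, eq_self_iff_true]
        by_cases hy : y1 = y2
        · simp only [if_pos hy]
          exact lt_of_lt_of_le (hδ2' hy1 (lt_of_lt_of_le hd1 (min_le_right _ _)))
            (by linarith)
        · simp only [if_neg hy]
          rw [Real.dist_eq]
          have := hδ1' y1 hy1 y2 hy2 hy
            (by rw [Real.dist_eq] at hd1; exact lt_of_lt_of_le hd1 (min_le_left _ _))
            (by rw [Real.dist_eq] at hd2; exact lt_of_lt_of_le hd2 (min_le_left _ _))
          linarith
      · have h1 : ContinuousWithinAt (fun p : ℝ × ℝ => f p.2 - f p.1) (D ×ˢ D) (a, b) :=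
          ((hf b hb).comp continuousWithinAt_snd fun q hq => hq.2).sub
            ((hf a ha).comp continuousWithinAt_fst fun q hq => hq.1)
        have h2 : ContinuousWithinAt (fun p : ℝ × ℝ => p.2 - p.1) (D ×ˢ D) (a, b) :=
          continuousWithinAt_snd.sub continuousWithinAt_fst
        have hF : ContinuousWithinAt (fun p : ℝ × ℝ => (f p.2 - f p.1) / (p.2 - p.1))
            (D ×ˢ D) (a, b) := h1.div h2 (sub_ne_zero.mpr (Ne.symm hab))
        have hopen : IsOpen {q : ℝ × ℝ | q.1 ≠ q.2} :=
          isOpen_ne_fun continuous_fst continuous_snd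
        have hEq : (fun p : ℝ × ℝ => if p.1 = p.2 then h p.1 else (f p.2 - f p.1) / (p.2 - p.1))
            =ᶠ[nhdsWithin (a, b) (D ×ˢ D)]
            fun p : ℝ × ℝ => (f p.2 - f p.1) / (p.2 - p.1) := by
          filter_upwards [nhdsWithin_le_nhds (hopen.mem_nhds hab)] with q hq
          exact if_neg hq
        exact hF.congr_of_eventuallyEq hEq (if_neg hab)
    · intro x hx; simp
    · intro x1 hx1 x2 hx2 hne; simp [if_neg hne]
  · rintro ⟨g, hg, hgd, hgo⟩ x hx ε hε
    have hc := hg (x, x) ⟨hx, hx⟩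
    rw [Metric.continuousWithinAt_iff] at hc
    obtain ⟨δ, hδ, hδ'⟩ := hc ε hε
    refine ⟨δ, hδ, ?_⟩
    intro x1 hx1 x2 hx2 hne hd1 hd2
    have := hδ' (x := (x1, x2)) ⟨hx1, hx2⟩ (by
      rw [Prod.dist_eq, max_lt_iff, Real.dist_eq, Real.dist_eq]
      exact ⟨hd1, hd2⟩)
    rwa [hgo x1 hx1 x2 hx2 hne, hgd x hx, Real.dist_eq] at this
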